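/- There exists a constant C* > 0, depending only on C_TAME, such that for every a ≥ C* the following holds: there exists δ > 0 (depending on a and T) such that for every tame discrete controlled process with parameter a as in the context with Δt_MAX < δ, and every 0 ≤ ν < N, one has E[q_{ν+1}²] ≥ exp((1/2)·a·Δt_ν)·E[q_ν²] + (1/2)·Δt_ν. -/

import Mathlib

open MeasureTheory ProbabilityTheory Real

noncomputable def dtStar (a dt : ℝ) : ℝ := if a = 0 then dt else (Real.exp (a * dt) - 1) / a

noncomputable def dtTilde (a dt : ℝ) : ℝ :=
  if a = 0 then dt else (Real.exp (2 * a * dt) - 1) / (2 * a)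

def IsPartition (N : ℕ) (T : ℝ) (t : ℕ → ℝ) : Prop :=
  t 0 = 0 ∧ t N = T ∧ ∀ ν < N, t ν < t (ν + 1)

noncomputable def dtMax (N : ℕ) (t : ℕ → ℝ) : ℝ := ⨆ ν : Fin N, (t (ν + 1) - t ν)

structure TameProcess {Ω : Type*} {mΩ : MeasurableSpace Ω} (μ : Measure Ω)
    (N : ℕ) (t : ℕ → ℝ) (a q0 Ct : ℝ) (F : Filtration ℕ mΩ)
    (q u ΔW : ℕ → Ω → ℝ) : Prop where
  w_meas : ∀ ν < N, Measurable[F (ν + 1)] (ΔW ν)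
  w_indep : ∀ ν < N, Indep (MeasurableSpace.comap (ΔW ν) inferInstance) (F ν) μ
  w_law : ∀ ν < N, μ.map (ΔW ν) = gaussianReal 0 (dtTilde a (t (ν + 1) - t ν)).toNNReal
  q_meas : ∀ ν ≤ N, Measurable[F ν] (q ν)
  u_meas : ∀ ν < N, Measurable[F ν] (u ν)
  q_init : ∀ᵐ ω ∂μ, q 0 ω = q0
  q_step : ∀ ν < N, ∀ᵐ ω ∂μ, q (ν + 1) ω =
      q ν ω + (a * q ν ω + u ν ω) * dtStar a (t (ν + 1) - t ν) + ΔW ν ω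
  u_tame : ∀ ν < N, ∀ᵐ ω ∂μ, |u ν ω| ≤ Ct * (|q ν ω| + 1)

noncomputable def zeta1 {Ω : Type*} (t : ℕ → ℝ) (q u : ℕ → Ω → ℝ) (ν : ℕ) (ω : Ω) : ℝ :=
  ∑ μ ∈ Finset.range ν, q μ ω * ((q (μ + 1) ω - q μ ω) - u μ ω * (t (μ + 1) - t μ))

noncomputable def zeta2 {Ω : Type*} (t : ℕ → ℝ) (q : ℕ → Ω → ℝ) (ν : ℕ) (ω : Ω) : ℝ :=
  ∑ μ ∈ Finset.range ν, (q μ ω) ^ 2 * (t (μ + 1) - t μ)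

section Helpers

open Filter Set

lemma ar_half (a Δt : ℝ) (h : Δt * (2 * a) < 1) (hΔt0 : 0 < Δt) (ha0 : 0 < a) :
    a * Δt < 1 / 2 := by nlinarith

lemma ar_log (a Δt l : ℝ) (h : Δt * (2 * a) < l) : 2 * (a * Δt) ≤ l := by nlinarith

lemma ar_sE (a Δt E : ℝ) (ha0 : 0 < a) (hE : E * (1 - a * Δt) ≤ 1) :
    (E - 1) / a ≤ Δt * E := by
  rw [div_le_iff₀ ha0]; nlinarith

lemma ar_vΔt (a Δt E : ℝ) (ha0 : 0 < a) (hΔt0 : 0 < Δt) (hE1 : 1 + a * Δt ≤ E) :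
    Δt ≤ (E ^ 2 - 1) / (2 * a) := by
  have h0 : (0:ℝ) ≤ 1 + a * Δt := by positivity
  have hsq : (1 + a * Δt) ^ 2 ≤ E ^ 2 := pow_le_pow_left₀ h0 hE1 2
  rw [le_div_iff₀ (by positivity)]
  nlinarith [sq_nonneg (a * Δt)]

lemma ar_r (C a Δt E : ℝ) (hΔt0 : 0 < Δt) (ha0 : 0 < a) (haC : 16 * C ^ 2 ≤ a) :
    4 * C ^ 2 * Δt / a * E ^ 2 ≤ Δt / 4 * E ^ 2 := by
  have h : 4 * C ^ 2 * Δt / a ≤ Δt / 4 := by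
    rw [div_le_div_iff₀ ha0 (by norm_num : (0:ℝ) < 4)]
    nlinarith
  nlinarith [sq_nonneg E]

lemma ar_Mc (x E M K r Δt : ℝ) (hx0 : 0 < x) (hx12 : x < 1 / 2) (hΔtx : Δt ≤ x)
    (hM0 : 0 < M) (hK : 1 + 3 * x / 2 ≤ K) (hEM : E ^ 2 = M * K)
    (hr : r ≤ Δt / 4 * E ^ 2) : M ≤ (1 - x / 2) * E ^ 2 - r := by
  have hpos : (0:ℝ) ≤ (1 - 3 * x / 4) * M := by nlinarith
  have hKmul := mul_le_mul_of_nonneg_left hK hpos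
  have hr2 : r ≤ x / 4 * E ^ 2 := by nlinarith [sq_nonneg E]
  have h1 : M ≤ (1 - 3 * x / 4) * M * (1 + 3 * x / 2) := by
    nlinarith [mul_nonneg hM0.le (show (0:ℝ) ≤ 3 * x / 4 - 9 * x ^ 2 / 8 by nlinarith)]
  have h2 : (1 - 3 * x / 4) * M * K = (1 - 3 * x / 4) * E ^ 2 := by rw [hEM]; ring
  nlinarith [h1, hKmul, h2, hr2]

lemma ar_vr (Δt v r E : ℝ) (hr : r ≤ Δt / 4 * E ^ 2) (hE2 : E ^ 2 ≤ 2)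
    (hΔt0 : 0 < Δt) (hv : Δt ≤ v) : Δt / 2 + r ≤ v := by nlinarith

lemma ar_εr (C a Δt E s : ℝ) (ha0 : 0 < a) (hΔt0 : 0 < Δt) (hs0 : 0 ≤ s)
    (hsE : s ≤ Δt * E) :
    2 * C ^ 2 * s ^ 2 ≤ a * Δt / 2 * (4 * C ^ 2 * Δt / a * E ^ 2) := by
  have hss : s ^ 2 ≤ Δt ^ 2 * E ^ 2 := by nlinarith
  have heq : a * Δt / 2 * (4 * C ^ 2 * Δt / a * E ^ 2) = 2 * C ^ 2 * (Δt ^ 2 * E ^ 2) := by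
    field_simp; ring
  rw [heq]
  nlinarith [sq_nonneg C, sq_nonneg s]

lemma ar_point (x E Q U s C r : ℝ) (hx0 : 0 < x) (hC0 : 0 < C)
    (hU : |U| ≤ C * (|Q| + 1)) (hεr : 2 * C ^ 2 * s ^ 2 ≤ x / 2 * r) :
    ((1 - x / 2) * E ^ 2 - r) * Q ^ 2 ≤ (E * Q + U * s) ^ 2 + r := by
  have hu2 : U ^ 2 * s ^ 2 ≤ 2 * C ^ 2 * (Q ^ 2 + 1) * s ^ 2 := by
    have h2 : U ^ 2 ≤ (C * (|Q| + 1)) ^ 2 := by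
      rw [← sq_abs U]
      exact pow_le_pow_left₀ (abs_nonneg U) hU 2
    have h3 : (C * (|Q| + 1)) ^ 2 ≤ 2 * C ^ 2 * (Q ^ 2 + 1) := by
      nlinarith [sq_abs Q, abs_nonneg Q, sq_nonneg (|Q| - 1), sq_nonneg C]
    nlinarith [sq_nonneg s]
  have hyoung : x / 2 * (1 - x / 2) * (E * Q) ^ 2 - (U * s) ^ 2
      ≤ x / 2 * (E * Q + U * s) ^ 2 := by
    nlinarith [sq_nonneg (x / 2 * (E * Q) + U * s), mul_nonneg hx0.le (sq_nonneg (U * s))]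
  have hprod : 0 ≤ (x / 2 * r - 2 * C ^ 2 * s ^ 2) * (Q ^ 2 + 1) :=
    mul_nonneg (by linarith) (by positivity)
  have hkey : x / 2 * (((1 - x / 2) * E ^ 2 - r) * Q ^ 2)
      ≤ x / 2 * ((E * Q + U * s) ^ 2 + r) := by nlinarith [sq_nonneg (U * s)]
  exact le_of_mul_le_mul_left hkey (by linarith)

lemma ar_dtx (a Δt : ℝ) (ha : 16 ≤ a) (h : 0 < Δt) : Δt ≤ a * Δt := by nlinarith


lemma integrable_sq_mul_exp {b : ℝ} (hb : 0 < b) :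
    Integrable (fun x : ℝ => x ^ 2 * Real.exp (-b * x ^ 2)) := by
  have h := integrable_rpow_mul_exp_neg_mul_sq hb (s := 2) (by norm_num)
  have heq : (fun x : ℝ => x ^ (2:ℝ) * Real.exp (-b * x ^ 2))
      = fun x : ℝ => x ^ 2 * Real.exp (-b * x ^ 2) := by
    ext x
    rw [show (2:ℝ) = ((2:ℕ):ℝ) by norm_num, Real.rpow_natCast]
  rwa [heq] at h

lemma tendsto_mul_exp_atTop {b : ℝ} (hb : 0 < b) :
    Tendsto (fun x : ℝ => x * Real.exp (-b * x ^ 2)) atTop (nhds 0) := by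
  have h := rpow_mul_exp_neg_mul_sq_isLittleO_exp_neg hb 1
  have h2 : Tendsto (fun x : ℝ => Real.exp (-(1/2) * x)) atTop (nhds 0) := by
    have : Tendsto (fun x : ℝ => -(1/2) * x) atTop atBot := by
      apply Filter.Tendsto.const_mul_atTop_of_neg (by norm_num) tendsto_id
    exact Real.tendsto_exp_atBot.comp this
  have h3 := h.trans_tendsto h2
  simpa [Real.rpow_one] using h3

lemma integral_sq_mul_exp {b : ℝ} (hb : 0 < b) :
    ∫ x : ℝ, x ^ 2 * Real.exp (-b * x ^ 2) = 1 / (2 * b) * Real.sqrt (π / b) := by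
  set f : ℝ → ℝ := fun x => x * Real.exp (-b * x ^ 2) with hf
  set f' : ℝ → ℝ := fun x => Real.exp (-b * x ^ 2) - 2 * b * (x ^ 2 * Real.exp (-b * x ^ 2)) with hf'
  have hderiv : ∀ x : ℝ, HasDerivAt f (f' x) x := by
    intro x
    have h1 : HasDerivAt (fun y : ℝ => -b * y ^ 2) (-b * (2 * x)) x := by
      simpa [mul_comm] using ((hasDerivAt_pow 2 x).const_mul (-b))
    have h2 := h1.exp
    have h3 := (hasDerivAt_id x).mul h2
    have h4 : 1 * rexp (-b * x ^ 2) + id x * (rexp (-b * x ^ 2) * (-b * (2 * x))) = f' x := by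
      rw [hf', id]
      ring
    exact h3.congr_deriv h4
  have hint : Integrable f' := by
    exact (integrable_exp_neg_mul_sq hb).sub ((integrable_sq_mul_exp hb).const_mul (2*b))
  have htop : Tendsto f atTop (nhds 0) := tendsto_mul_exp_atTop hb
  have hbot : Tendsto f atBot (nhds 0) := by
    have h1 : Tendsto (fun x : ℝ => f (-x)) atTop (nhds 0) := by
      have := htop.neg
      rw [neg_zero] at this
      refine this.congr fun x => ?_
      show -(x * rexp (-b * x ^ 2)) = -x * rexp (-b * (-x) ^ 2)
      ring_nf
    have h2 := h1.comp tendsto_neg_atBot_atTop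
    refine h2.congr fun x => ?_
    simp [Function.comp]
  have hIoi : ∫ x in Ioi (0:ℝ), f' x = 0 - f 0 :=
    integral_Ioi_of_hasDerivAt_of_tendsto' (fun x _ => hderiv x) hint.integrableOn htop
  have hIic : ∫ x in Iic (0:ℝ), f' x = f 0 - 0 :=
    integral_Iic_of_hasDerivAt_of_tendsto' (fun x _ => hderiv x) hint.integrableOn hbot
  have htotal : ∫ x : ℝ, f' x = 0 := by
    rw [← intervalIntegral.integral_Iic_add_Ioi hint.integrableOn hint.integrableOn, hIoi, hIic]
    ring
  have hsplit : ∫ x : ℝ, f' x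
      = (∫ x : ℝ, Real.exp (-b * x ^ 2)) - 2 * b * ∫ x : ℝ, x ^ 2 * Real.exp (-b * x ^ 2) := by
    rw [hf']
    rw [integral_sub (integrable_exp_neg_mul_sq hb) ((integrable_sq_mul_exp hb).const_mul (2*b)),
      integral_const_mul]
  rw [htotal, integral_gaussian] at hsplit
  have h2b : (2 * b) ≠ 0 := by positivity
  field_simp at hsplit ⊢
  linarith

lemma lintegral_sq_gaussianReal (v : NNReal) :
    ∫⁻ x, ENNReal.ofReal (x ^ 2) ∂(gaussianReal 0 v) = ENNReal.ofReal (v : ℝ) := by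
  rcases eq_or_ne v 0 with hv | hv
  · subst hv
    rw [gaussianReal_zero_var, lintegral_dirac]
    simp
  · have hv0 : (0:ℝ) < v := lt_of_le_of_ne v.coe_nonneg (by exact_mod_cast hv.symm)
    set b : ℝ := 1 / (2 * v) with hb
    have hbpos : 0 < b := by positivity
    have hpdf : ∀ x : ℝ, gaussianPDFReal 0 v x * x ^ 2
        = (Real.sqrt (2 * π * v))⁻¹ * (x ^ 2 * Real.exp (-b * x ^ 2)) := by
      intro x
      rw [gaussianPDFReal]
      have : -(x - 0) ^ 2 / (2 * v) = -b * x ^ 2 := by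
        rw [hb]; field_simp; ring
      rw [this]; ring
    have hint : Integrable (fun x : ℝ => gaussianPDFReal 0 v x * x ^ 2) := by
      have := ((integrable_sq_mul_exp hbpos).const_mul (Real.sqrt (2 * π * v))⁻¹)
      exact this.congr (ae_of_all _ fun x => (hpdf x).symm)
    have hval : ∫ x : ℝ, gaussianPDFReal 0 v x * x ^ 2 = (v : ℝ) := by
      have hrw : ∫ x : ℝ, gaussianPDFReal 0 v x * x ^ 2
          = (Real.sqrt (2 * π * v))⁻¹ * ∫ x : ℝ, x ^ 2 * Real.exp (-b * x ^ 2) := by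
        rw [← integral_const_mul]
        exact integral_congr_ae (ae_of_all _ hpdf)
      rw [hrw, integral_sq_mul_exp hbpos]
      have hπb : π / b = 2 * π * v := by rw [hb]; field_simp
      have h2b : 1 / (2 * b) = (v : ℝ) := by rw [hb]; field_simp
      rw [hπb, h2b]
      have hs : Real.sqrt (2 * π * v) ≠ 0 := by
        refine ne_of_gt (Real.sqrt_pos.mpr ?_)
        positivity
      field_simp
    rw [gaussianReal_of_var_ne_zero 0 hv,
      lintegral_withDensity_eq_lintegral_mul _ (measurable_gaussianPDF 0 v)
        (by exact (measurable_id.pow_const 2).ennreal_ofReal)]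
    have : ∀ x : ℝ, gaussianPDF 0 v x * ENNReal.ofReal (x ^ 2)
        = ENNReal.ofReal (gaussianPDFReal 0 v x * x ^ 2) := by
      intro x
      rw [gaussianPDF, ← ENNReal.ofReal_mul (gaussianPDFReal_nonneg 0 v x)]
    calc ∫⁻ x, (gaussianPDF 0 v * fun x => ENNReal.ofReal (x ^ 2)) x
        = ∫⁻ x, ENNReal.ofReal (gaussianPDFReal 0 v x * x ^ 2) := by
          refine lintegral_congr fun x => ?_
          exact this x
      _ = ENNReal.ofReal (∫ x : ℝ, gaussianPDFReal 0 v x * x ^ 2) :=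
          (ofReal_integral_eq_lintegral_ofReal hint
            (ae_of_all _ fun x => mul_nonneg (gaussianPDFReal_nonneg 0 v x) (sq_nonneg x))).symm
      _ = ENNReal.ofReal (v : ℝ) := by rw [hval]

lemma lintegral_add_sq_gaussianReal (c : ℝ) (v : NNReal) :
    ∫⁻ x, ENNReal.ofReal ((c + x) ^ 2) ∂(gaussianReal 0 v)
      = ENNReal.ofReal (c ^ 2) + ENNReal.ofReal (v : ℝ) := by
  have hmap : (gaussianReal 0 v).map (fun x => (-1 : ℝ) * x) = gaussianReal 0 v := by
    have h := gaussianReal_map_const_mul (μ := 0) (v := v) (-1)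
    simpa using h
  have hsymm : ∫⁻ x, ENNReal.ofReal ((c + x) ^ 2) ∂(gaussianReal 0 v)
      = ∫⁻ x, ENNReal.ofReal ((c - x) ^ 2) ∂(gaussianReal 0 v) := by
    conv_lhs => rw [← hmap]
    rw [lintegral_map (by fun_prop) (by fun_prop)]
    refine lintegral_congr fun x => ?_
    norm_num
    ring_nf
  have hkey : (2 : ENNReal) * ∫⁻ x, ENNReal.ofReal ((c + x) ^ 2) ∂(gaussianReal 0 v)
      = 2 * (ENNReal.ofReal (c ^ 2) + ENNReal.ofReal (v : ℝ)) := by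
    have hsum : ∫⁻ x, (ENNReal.ofReal ((c + x) ^ 2) + ENNReal.ofReal ((c - x) ^ 2))
          ∂(gaussianReal 0 v)
        = (∫⁻ x, ENNReal.ofReal ((c + x) ^ 2) ∂(gaussianReal 0 v))
          + ∫⁻ x, ENNReal.ofReal ((c - x) ^ 2) ∂(gaussianReal 0 v) :=
      lintegral_add_left (by fun_prop) _
    have hptwise : ∀ x : ℝ, ENNReal.ofReal ((c + x) ^ 2) + ENNReal.ofReal ((c - x) ^ 2)
        = 2 * (ENNReal.ofReal (c ^ 2) + ENNReal.ofReal (x ^ 2)) := by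
      intro x
      rw [← ENNReal.ofReal_add (sq_nonneg _) (sq_nonneg _),
        ← ENNReal.ofReal_add (sq_nonneg _) (sq_nonneg _),
        show ((2:ENNReal)) = ENNReal.ofReal (2:ℝ) by norm_num,
        ← ENNReal.ofReal_mul (by norm_num)]
      congr 1
      ring
    have hsum2 : ∫⁻ x, (ENNReal.ofReal ((c + x) ^ 2) + ENNReal.ofReal ((c - x) ^ 2))
          ∂(gaussianReal 0 v)
        = 2 * (ENNReal.ofReal (c ^ 2) + ENNReal.ofReal (v : ℝ)) := by
      rw [lintegral_congr hptwise, lintegral_const_mul 2 (by fun_prop),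
        lintegral_add_left measurable_const, lintegral_const, measure_univ, mul_one,
        lintegral_sq_gaussianReal]
    rw [two_mul]
    nth_rewrite 2 [hsymm]
    rw [← hsum, hsum2]
  have h2 : (2 : ENNReal) ≠ 0 := by norm_num
  have h2' : (2 : ENNReal) ≠ ⊤ := by norm_num
  exact (ENNReal.mul_right_inj h2 h2').mp hkey

lemma lintegral_indep_add_gaussian {Ω : Type} {mΩ : MeasurableSpace Ω} (μ : Measure Ω)
    [IsProbabilityMeasure μ] {X W : Ω → ℝ} (hX : Measurable X) (hW : Measurable W)
    (hindep : IndepFun X W μ) (v : NNReal) (hlaw : μ.map W = gaussianReal 0 v) :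
    ∫⁻ ω, ENNReal.ofReal ((X ω + W ω) ^ 2) ∂μ
      = (∫⁻ ω, ENNReal.ofReal ((X ω) ^ 2) ∂μ) + ENNReal.ofReal (v : ℝ) := by
  have hprod : μ.map (fun ω => (X ω, W ω)) = (μ.map X).prod (μ.map W) :=
    (indepFun_iff_map_prod_eq_prod_map_map hX.aemeasurable hW.aemeasurable).mp hindep
  have : IsProbabilityMeasure (μ.map X) := Measure.isProbabilityMeasure_map hX.aemeasurable
  have hmeas : Measurable (fun p : ℝ × ℝ => ENNReal.ofReal ((p.1 + p.2) ^ 2)) := by fun_prop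
  calc ∫⁻ ω, ENNReal.ofReal ((X ω + W ω) ^ 2) ∂μ
      = ∫⁻ p : ℝ × ℝ, ENNReal.ofReal ((p.1 + p.2) ^ 2) ∂(μ.map (fun ω => (X ω, W ω))) := by
        rw [lintegral_map hmeas (hX.prodMk hW)]
    _ = ∫⁻ x, ∫⁻ w, ENNReal.ofReal ((x + w) ^ 2) ∂(gaussianReal 0 v) ∂(μ.map X) := by
        rw [hprod, hlaw, lintegral_prod _ hmeas.aemeasurable]
    _ = ∫⁻ x, (ENNReal.ofReal (x ^ 2) + ENNReal.ofReal (v : ℝ)) ∂(μ.map X) :=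
        lintegral_congr fun x => lintegral_add_sq_gaussianReal x v
    _ = (∫⁻ x, ENNReal.ofReal (x ^ 2) ∂(μ.map X)) + ENNReal.ofReal (v : ℝ) := by
        rw [lintegral_add_right _ measurable_const, lintegral_const, measure_univ, mul_one]
    _ = (∫⁻ ω, ENNReal.ofReal ((X ω) ^ 2) ∂μ) + ENNReal.ofReal (v : ℝ) := by
        rw [lintegral_map (by fun_prop) hX]

end Helpers

/-- one-step exponential growth of `E[q_ν²]` under any tame strategy
when the parameter `a` is large positive. -/
theorem statement12 (Ct : ℝ) :
    ∃ Cstar > (0 : ℝ),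
      ∀ a : ℝ, Cstar ≤ a →
      ∀ T : ℝ, 0 < T →
      ∃ δ > (0 : ℝ),
        ∀ (Ω : Type) (mΩ : MeasurableSpace Ω) (μ : Measure Ω), IsProbabilityMeasure μ →
        ∀ (N : ℕ), 1 ≤ N →
        ∀ (t : ℕ → ℝ), IsPartition N T t →
        ∀ (q0 : ℝ) (F : Filtration ℕ mΩ) (q u ΔW : ℕ → Ω → ℝ),
          TameProcess μ N t a q0 Ct F q u ΔW →
          dtMax N t < δ →
          ∀ ν < N,
            ENNReal.ofReal (Real.exp ((1 / 2) * a * (t (ν + 1) - t ν))) *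
                (∫⁻ ω, ENNReal.ofReal ((q ν ω) ^ 2) ∂μ)
              + ENNReal.ofReal ((1 / 2) * (t (ν + 1) - t ν))
            ≤ ∫⁻ ω, ENNReal.ofReal ((q (ν + 1) ω) ^ 2) ∂μ := by
  classical
  set C := max Ct 1 with hCdef
  have hC1 : (1:ℝ) ≤ C := le_max_right _ _
  have hCt : Ct ≤ C := le_max_left _ _
  have hC0 : (0:ℝ) < C := lt_of_lt_of_le one_pos hC1
  refine ⟨16 * C ^ 2, by nlinarith, ?_⟩
  intro a ha T hT
  have ha16 : (16:ℝ) ≤ a := le_trans (by nlinarith) ha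
  have ha0 : (0:ℝ) < a := by linarith
  have hlog2 : 0 < Real.log 2 := Real.log_pos (by norm_num)
  refine ⟨min (Real.log 2 / (2 * a)) (1 / (2 * a)),
    lt_min (by positivity) (by positivity), ?_⟩
  intro Ω mΩ μ hμ N hN t hpart q0 F q u ΔW hproc hmax ν hν
  obtain ⟨hpart0, hpartT, hpartlt⟩ := hpart
  set Δt := t (ν + 1) - t ν with hΔtdef
  have hΔt0 : 0 < Δt := sub_pos.2 (hpartlt ν hν)
  have hle : Δt ≤ dtMax N t := by
    unfold dtMax
    exact le_ciSup (f := fun i : Fin N => t (↑i + 1) - t ↑i)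
      (Set.Finite.bddAbove (Set.finite_range _)) ⟨ν, hν⟩
  obtain ⟨hδ1, hδ2⟩ := lt_min_iff.mp (lt_of_le_of_lt hle hmax)
  rw [lt_div_iff₀ (by positivity : (0:ℝ) < 2 * a)] at hδ1 hδ2
  set x := a * Δt with hxdef
  have hx0 : 0 < x := mul_pos ha0 hΔt0
  have hx12 : x < 1 / 2 := by rw [hxdef]; exact ar_half a Δt hδ2 hΔt0 ha0
  have hxlog : 2 * x ≤ Real.log 2 := by rw [hxdef]; exact ar_log a Δt _ hδ1
  set E := Real.exp x with hEdef
  have hE0 : 0 < E := Real.exp_pos x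
  have hE1 : 1 + x ≤ E := by have := Real.add_one_le_exp x; linarith
  have hE2 : E ^ 2 ≤ 2 := by
    have hEE : E ^ 2 = Real.exp (2 * x) := by
      rw [hEdef, sq, ← Real.exp_add]; ring_nf
    rw [hEE]
    calc Real.exp (2 * x) ≤ Real.exp (Real.log 2) := Real.exp_le_exp.mpr hxlog
      _ = 2 := Real.exp_log (by norm_num)
  have hane : a ≠ 0 := ne_of_gt ha0
  have hsdt : dtStar a Δt = (E - 1) / a := by
    rw [dtStar, if_neg hane, hEdef, hxdef]
  set s := (E - 1) / a with hsdef
  have hs0 : 0 ≤ s := div_nonneg (by linarith) ha0.le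
  have hsE : s ≤ Δt * E := by
    have hi : 1 - x ≤ Real.exp (-x) := by have := Real.add_one_le_exp (-x); linarith
    have hinv : Real.exp (-x) = E⁻¹ := by rw [hEdef, Real.exp_neg]
    have h2 : E * (1 - x) ≤ 1 := by
      rw [hinv] at hi
      calc E * (1 - x) ≤ E * E⁻¹ := mul_le_mul_of_nonneg_left hi hE0.le
        _ = 1 := mul_inv_cancel₀ (ne_of_gt hE0)
    rw [hxdef] at h2
    rw [hsdef]
    exact ar_sE a Δt E ha0 h2
  have hvdt : dtTilde a Δt = (E ^ 2 - 1) / (2 * a) := by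
    rw [dtTilde, if_neg hane]
    congr 1
    rw [hEdef, sq, ← Real.exp_add, hxdef]
    ring_nf
  set v := (E ^ 2 - 1) / (2 * a) with hvdef
  have hvΔt : Δt ≤ v := by
    rw [hvdef]
    exact ar_vΔt a Δt E ha0 hΔt0 (by rw [← hxdef]; exact hE1)
  have hv0 : 0 ≤ v := le_trans hΔt0.le hvΔt
  set r := 4 * C ^ 2 * Δt / a * E ^ 2 with hrdef
  have hr0 : 0 ≤ r := by positivity
  have hrq : r ≤ Δt / 4 * E ^ 2 := by rw [hrdef]; exact ar_r C a Δt E hΔt0 ha0 ha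
  set c := (1 - x / 2) * E ^ 2 - r with hcdef
  set M := Real.exp (1 / 2 * a * Δt) with hMdef
  have hM0 : 0 < M := Real.exp_pos _
  have hMc : M ≤ c := by
    have hEM : E ^ 2 = M * Real.exp (3 * x / 2) := by
      rw [hEdef, hMdef, sq, ← Real.exp_add, ← Real.exp_add, hxdef]
      ring_nf
    have hK : 1 + 3 * x / 2 ≤ Real.exp (3 * x / 2) := by
      have := Real.add_one_le_exp (3 * x / 2); linarith
    have hΔtx : Δt ≤ x := by rw [hxdef]; exact ar_dtx a Δt ha16 hΔt0
    rw [hcdef]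
    exact ar_Mc x E M (Real.exp (3 * x / 2)) r Δt hx0 hx12 hΔtx hM0 hK hEM hrq
  have hc0 : 0 ≤ c := le_trans hM0.le hMc
  have hvr : Δt / 2 + r ≤ v := ar_vr Δt v r E hrq hE2 hΔt0 hvΔt
  have hqm : Measurable (q ν) := (hproc.q_meas ν hν.le).mono (F.le ν) le_rfl
  have hum : Measurable (u ν) := (hproc.u_meas ν hν).mono (F.le ν) le_rfl
  have hWm : Measurable (ΔW ν) := (hproc.w_meas ν hν).mono (F.le (ν + 1)) le_rfl
  set X : Ω → ℝ := fun ω => E * q ν ω + u ν ω * s with hXdef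
  have hXmF : Measurable[F ν] X :=
    ((hproc.q_meas ν hν.le).const_mul E).add ((hproc.u_meas ν hν).mul_const s)
  have hXm : Measurable X := hXmF.mono (F.le ν) le_rfl
  have hindep : IndepFun X (ΔW ν) μ := by
    rw [IndepFun_iff_Indep]
    exact indep_of_indep_of_le_left (hproc.w_indep ν hν).symm hXmF.comap_le
  set v' := (dtTilde a Δt).toNNReal with hv'def
  have hv'c : (v' : ℝ) = v := by
    rw [hv'def, hvdt]
    exact Real.coe_toNNReal _ hv0
  have hlaw : μ.map (ΔW ν) = gaussianReal 0 v' := hproc.w_law ν hν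
  have hstep : ∀ᵐ ω ∂μ, q (ν + 1) ω = X ω + ΔW ν ω := by
    filter_upwards [hproc.q_step ν hν] with ω hω
    rw [hω, ← hΔtdef, hsdt]
    have hXeq : q ν ω + (a * q ν ω + u ν ω) * s = X ω := by
      show q ν ω + (a * q ν ω + u ν ω) * s = E * q ν ω + u ν ω * s
      rw [hsdef]
      field_simp
      ring
    rw [hXeq]
  have hI1 : ∫⁻ ω, ENNReal.ofReal ((q (ν + 1) ω) ^ 2) ∂μ
      = (∫⁻ ω, ENNReal.ofReal ((X ω) ^ 2) ∂μ) + ENNReal.ofReal v := by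
    calc ∫⁻ ω, ENNReal.ofReal ((q (ν + 1) ω) ^ 2) ∂μ
        = ∫⁻ ω, ENNReal.ofReal ((X ω + ΔW ν ω) ^ 2) ∂μ :=
          lintegral_congr_ae (hstep.mono fun ω h => by dsimp only; rw [h])
      _ = (∫⁻ ω, ENNReal.ofReal ((X ω) ^ 2) ∂μ) + ENNReal.ofReal (v' : ℝ) :=
          lintegral_indep_add_gaussian μ hXm hWm hindep v' hlaw
      _ = (∫⁻ ω, ENNReal.ofReal ((X ω) ^ 2) ∂μ) + ENNReal.ofReal v := by rw [hv'c]
  have hpt : ∀ᵐ ω ∂μ, ENNReal.ofReal c * ENNReal.ofReal ((q ν ω) ^ 2)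
      ≤ ENNReal.ofReal ((X ω) ^ 2) + ENNReal.ofReal r := by
    filter_upwards [hproc.u_tame ν hν] with ω hu
    have hXω : X ω = E * q ν ω + u ν ω * s := rfl
    have hεr : 2 * C ^ 2 * s ^ 2 ≤ x / 2 * r := by
      rw [hxdef, hrdef]
      exact ar_εr C a Δt E s ha0 hΔt0 hs0 hsE
    have hU : |u ν ω| ≤ C * (|q ν ω| + 1) :=
      le_trans hu (mul_le_mul_of_nonneg_right hCt (by positivity))
    have hreal : c * (q ν ω) ^ 2 ≤ (X ω) ^ 2 + r := by
      rw [hcdef, hXω]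
      exact ar_point x E (q ν ω) (u ν ω) s C r hx0 hC0 hU hεr
    calc ENNReal.ofReal c * ENNReal.ofReal ((q ν ω) ^ 2)
        = ENNReal.ofReal (c * (q ν ω) ^ 2) := (ENNReal.ofReal_mul hc0).symm
      _ ≤ ENNReal.ofReal ((X ω) ^ 2 + r) := ENNReal.ofReal_le_ofReal hreal
      _ = ENNReal.ofReal ((X ω) ^ 2) + ENNReal.ofReal r :=
          ENNReal.ofReal_add (sq_nonneg _) hr0
  set I0 := ∫⁻ ω, ENNReal.ofReal ((q ν ω) ^ 2) ∂μ with hI0def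
  have hIX : ENNReal.ofReal c * I0
      ≤ (∫⁻ ω, ENNReal.ofReal ((X ω) ^ 2) ∂μ) + ENNReal.ofReal r := by
    calc ENNReal.ofReal c * I0
        = ∫⁻ ω, ENNReal.ofReal c * ENNReal.ofReal ((q ν ω) ^ 2) ∂μ :=
          (lintegral_const_mul _ (by fun_prop)).symm
      _ ≤ ∫⁻ ω, (ENNReal.ofReal ((X ω) ^ 2) + ENNReal.ofReal r) ∂μ := lintegral_mono_ae hpt
      _ = (∫⁻ ω, ENNReal.ofReal ((X ω) ^ 2) ∂μ) + ENNReal.ofReal r := by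
          rw [lintegral_add_right _ measurable_const, lintegral_const, measure_univ, mul_one]
  have hchain : ENNReal.ofReal M * I0 + ENNReal.ofReal (1 / 2 * Δt) + ENNReal.ofReal r
      ≤ (∫⁻ ω, ENNReal.ofReal ((q (ν + 1) ω) ^ 2) ∂μ) + ENNReal.ofReal r := by
    rw [hI1]
    calc ENNReal.ofReal M * I0 + ENNReal.ofReal (1 / 2 * Δt) + ENNReal.ofReal r
        = ENNReal.ofReal M * I0 + ENNReal.ofReal (1 / 2 * Δt + r) := by
          rw [ENNReal.ofReal_add (by linarith) hr0, add_assoc]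
      _ ≤ ENNReal.ofReal c * I0 + ENNReal.ofReal v :=
          add_le_add (mul_le_mul_left (ENNReal.ofReal_le_ofReal hMc) I0)
            (ENNReal.ofReal_le_ofReal (by linarith))
      _ ≤ ((∫⁻ ω, ENNReal.ofReal ((X ω) ^ 2) ∂μ) + ENNReal.ofReal r) + ENNReal.ofReal v :=
          add_le_add_left hIX _
      _ = ((∫⁻ ω, ENNReal.ofReal ((X ω) ^ 2) ∂μ) + ENNReal.ofReal v) + ENNReal.ofReal r := by
          rw [add_right_comm]
  exact (ENNReal.add_le_add_iff_right ENNReal.ofReal_ne_top).mp hchain
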